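/- For the root system D_n (n ≥ 3) and any m ≥ 1, the numbers h⁺ᵢ(D_n, m) = C(n,i)·C(m(n−1)−1, i) + C(n−2, i−2)·C(m(n−1), i) satisfy Σ_{i=0}^{n} h⁺ᵢ(D_n, m) = N⁺(D_n, m) = ∏_{j} (e_j + m(2n−2) − 1)/(e_j + 1), where the exponents of D_n are 1, 3, 5, …, 2n−3, n−1 and h = 2n−2. -/

import Mathlib

open Finset

lemma sum_ext_aux (f : ℕ → ℕ) (A B : ℕ) (hA : ∀ j, A ≤ j → f j = 0)
    (hB : ∀ j, B ≤ j → f j = 0) :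
    ∑ j ∈ Finset.range A, f j = ∑ j ∈ Finset.range B, f j := by
  rcases le_total A B with h | h
  · refine Finset.sum_subset (Finset.range_subset_range.2 h) fun x _ hx => ?_
    exact hA x (by simpa using hx)
  · refine (Finset.sum_subset (Finset.range_subset_range.2 h) fun x _ hx => ?_).symm
    exact hB x (by simpa using hx)

lemma vand1_aux (n M : ℕ) :
    ∑ i ∈ Finset.range (n + 1), n.choose i * M.choose i = (M + n).choose n := by
  rw [Nat.add_choose_eq, Finset.Nat.sum_antidiagonal_eq_sum_range_succ_mk]
  refine Finset.sum_congr rfl fun i hi => ?_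
  rw [Finset.mem_range] at hi
  rw [Nat.choose_symm (by omega : i ≤ n), mul_comm]

lemma vand2_aux (a M' : ℕ) :
    ∑ j ∈ Finset.range (a + 1), a.choose j * (M' + 2).choose (j + 2)
      = (a + (M' + 2)).choose (a + 2) := by
  have h1 : (a + (M' + 2)).choose (a + 2) = (a + (M' + 2)).choose M' := by
    rw [← Nat.choose_symm (by omega : a + 2 ≤ a + (M' + 2))]
    congr 1; omega
  rw [h1, Nat.add_choose_eq, Finset.Nat.sum_antidiagonal_eq_sum_range_succ_mk]
  have h2 : ∀ i ∈ Finset.range (M' + 1),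
      a.choose i * (M' + 2).choose (M' - i) = a.choose i * (M' + 2).choose (i + 2) := by
    intro i hi; rw [Finset.mem_range] at hi
    congr 1
    rw [← Nat.choose_symm (by omega : M' - i ≤ M' + 2)]
    congr 1; omega
  rw [Finset.sum_congr rfl h2]
  refine sum_ext_aux _ _ _ (fun j hj => ?_) (fun j hj => ?_)
  · rw [Nat.choose_eq_zero_of_lt (by omega : a < j), zero_mul]
  · rw [Nat.choose_eq_zero_of_lt (by omega : M' + 2 < j + 2), mul_zero]

lemma prod_aux (a : ℕ) : ∀ k : ℕ,
    ∏ j ∈ Finset.Icc 1 k, (((a : ℚ) + j) / j) = ((a + k).choose k : ℚ)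
  | 0 => by simp
  | (k + 1) => by
    rw [Finset.prod_Icc_succ_top (by omega : 1 ≤ k + 1), prod_aux a k,
      show a + (k + 1) = a + k + 1 from by omega]
    have h := Nat.add_one_mul_choose_eq (a + k) k
    have hq : ((a + k : ℕ) + 1 : ℚ) * ((a + k).choose k : ℚ)
        = (((a + k + 1).choose (k + 1) : ℕ) : ℚ) * ((k : ℚ) + 1) := by
      exact_mod_cast congrArg (Nat.cast : ℕ → ℚ) h
    have hk : ((k : ℚ) + 1) ≠ 0 := by positivity
    push_cast at hq ⊢
    field_simp
    nlinarith [hq]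

lemma key_aux (M' k : ℕ) :
    (k + 3) * ((M' + k + 4).choose (k + 3) + (M' + k + 3).choose (k + 3))
      = (2 * M' + k + 5) * (M' + k + 3).choose (k + 2) := by
  have h1 := Nat.add_one_mul_choose_eq (M' + k + 3) (k + 2)
  have h2 := Nat.choose_succ_right_eq (M' + k + 3) (k + 2)
  have h3 : M' + k + 3 - (k + 2) = M' + 1 := by omega
  rw [h3] at h2
  zify at h1 h2 ⊢
  nlinarith [h1, h2]

/-- The refined numbers `h⁺ᵢ(D_n, m) = C(n,i)·C(m(n−1)−1,i) + C(n−2,i−2)·C(m(n−1),i)`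
(with the convention `C(n−2, i−2) = 0` for `i < 2`) sum to the positive Fuss–Catalan
number `N⁺(D_n, m) = ∏_j (e_j + m(2n−2) − 1)/(e_j + 1)`, where the exponents of `D_n`
are `1, 3, 5, …, 2n−3` together with `n−1` and the Coxeter number is `h = 2n−2`. -/
theorem hplus_sum_typeD (m n : ℕ) (hm : 1 ≤ m) (hn : 3 ≤ n) :
    (∑ i ∈ Finset.range (n + 1),
        ((n.choose i : ℚ) * ((m * (n - 1) - 1).choose i : ℚ) +
          if 2 ≤ i then ((n - 2).choose (i - 2) : ℚ) * ((m * (n - 1)).choose i : ℚ)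
          else 0))
      = (∏ j ∈ Finset.Icc 1 (n - 1),
          ((2 * (j : ℚ) - 1) + m * (2 * (n : ℚ) - 2) - 1) / ((2 * (j : ℚ) - 1) + 1)) *
        ((((n : ℚ) - 1) + m * (2 * (n : ℚ) - 2) - 1) / (((n : ℚ) - 1) + 1)) := by
  obtain ⟨k, rfl⟩ : ∃ k, n = k + 3 := ⟨n - 3, by omega⟩
  obtain ⟨M', hM⟩ : ∃ M', m * (k + 2) = M' + 2 := by
    have h2 : k + 2 ≤ m * (k + 2) := Nat.le_mul_of_pos_left _ (by omega)
    exact ⟨m * (k + 2) - 2, by omega⟩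
  have hsub1 : k + 3 - 1 = k + 2 := by omega
  have hsub2 : k + 3 - 2 = k + 1 := by omega
  rw [hsub1, hsub2, hM]
  have hsub3 : M' + 2 - 1 = M' + 1 := by omega
  rw [hsub3]
  -- LHS
  have e1 : ∀ i ∈ Finset.range (k + 3 + 1),
      ((k + 3).choose i : ℚ) * ((M' + 1).choose i : ℚ) +
        (if 2 ≤ i then ((k + 1).choose (i - 2) : ℚ) * ((M' + 2).choose i : ℚ) else 0)
      = (((k + 3).choose i * (M' + 1).choose i +
          (if 2 ≤ i then (k + 1).choose (i - 2) * (M' + 2).choose i else 0) : ℕ) : ℚ) := by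
    intro i _
    push_cast [apply_ite (Nat.cast : ℕ → ℚ)]
    ring
  rw [Finset.sum_congr rfl e1, ← Nat.cast_sum]
  have hnat : ∑ i ∈ Finset.range (k + 3 + 1),
      ((k + 3).choose i * (M' + 1).choose i +
        (if 2 ≤ i then (k + 1).choose (i - 2) * (M' + 2).choose i else 0))
      = (M' + 1 + (k + 3)).choose (k + 3) + (k + 1 + (M' + 2)).choose (k + 3) := by
    rw [Finset.sum_add_distrib, vand1_aux]
    congr 1
    rw [Finset.sum_range_succ' _ (k + 3), Finset.sum_range_succ' _ (k + 2)]
    simp only [show ∀ i : ℕ, 2 ≤ i + 1 + 1 from fun i => by omega, if_true,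
      show ¬ (2 ≤ 1) from by omega, show ¬ (2 ≤ 0) from by omega, if_false,
      add_zero]
    have : ∀ i : ℕ, i + 1 + 1 - 2 = i := fun i => by omega
    simp only [this]
    have := vand2_aux (k + 1) M'
    simpa using this
  rw [hnat]
  -- RHS product
  have hprod : ∏ j ∈ Finset.Icc 1 (k + 2),
      ((2 * (j : ℚ) - 1) + m * (2 * ((k + 3 : ℕ) : ℚ) - 2) - 1) / ((2 * (j : ℚ) - 1) + 1)
      = ∏ j ∈ Finset.Icc 1 (k + 2), (((M' + 1 : ℕ) : ℚ) + j) / j := by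
    refine Finset.prod_congr rfl fun j hj => ?_
    have hj1 : 1 ≤ j := (Finset.mem_Icc.mp hj).1
    have hjq : (0 : ℚ) < (j : ℚ) := by exact_mod_cast hj1
    have hmq : (m : ℚ) * ((k : ℚ) + 2) = (M' : ℚ) + 2 := by exact_mod_cast hM
    push_cast
    rw [div_eq_div_iff (by linarith) (by linarith)]
    ring_nf
    nlinarith [hmq, hjq]
  rw [hprod, prod_aux (M' + 1) (k + 2)]
  -- final
  have hkey := key_aux M' k
  have hkeyq : ((k : ℚ) + 3) * (((M' + k + 4).choose (k + 3) : ℚ) + ((M' + k + 3).choose (k + 3) : ℚ))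
      = (2 * (M' : ℚ) + (k : ℚ) + 5) * ((M' + k + 3).choose (k + 2) : ℚ) := by
    exact_mod_cast congrArg (Nat.cast : ℕ → ℚ) hkey
  have e2 : M' + 1 + (k + 3) = M' + k + 4 := by omega
  have e3 : k + 1 + (M' + 2) = M' + k + 3 := by omega
  have e4 : M' + 1 + (k + 2) = M' + k + 3 := by omega
  rw [e2, e3, e4]
  have hk3 : ((k : ℚ) + 3) ≠ 0 := by positivity
  have hmq : (m : ℚ) * ((k : ℚ) + 2) = (M' : ℚ) + 2 := by exact_mod_cast hM
  push_cast
  have hden : ((k : ℚ) + 3 - 1 + 1) ≠ 0 := by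
    have : ((k : ℚ) + 3 - 1 + 1) = (k : ℚ) + 3 := by ring
    rw [this]; exact hk3
  rw [mul_div_assoc'] at *
  rw [eq_div_iff hden]
  linear_combination hkeyq - 2 * ((((M' + k + 3).choose (k + 2)) : ℚ)) * hmq
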